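/- Let V be a finite-dimensional vector space over a finite field F, let X = (X_1,...,X_k) be a family of subspaces of V, and let r be the maximum dimension of a partial q-transversal of X. Then there exists a subset J ⊆ {1,...,k} with |J| = r such that the partial q-transversals of the subfamily (X_j : j ∈ J) are exactly the partial q-transversals of X. -/

import Mathlib

/-- `T` is a partial q-transversal of the family `X` of subspaces of `V`: every
(vector-space) basis `b 1, …, b m` of `T` admits an injection `σ` into the index set
with `b i ∉ X (σ i)` for all `i`. -/
def IsPartialQTransversal {F V ι : Type*} [Field F] [AddCommGroup V] [Module F V]
    (X : ι → Submodule F V) (T : Submodule F V) : Prop :=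
  ∀ (m : ℕ) (b : Fin m → V), LinearIndependent F b → Submodule.span F (Set.range b) = T →
    ∃ σ : Fin m → ι, Function.Injective σ ∧ ∀ i, b i ∉ X (σ i)

open Submodule Module Finset
open scoped Classical
set_option linter.unusedSectionVars false

section Core
variable {F V : Type*} [Field F] [AddCommGroup V] [Module F V] [FiniteDimensional F V]
variable {k : ℕ} (X : Fin k → Submodule F V)

/-- indices in `J` whose subspace does not contain `W`. -/
noncomputable def NN (J : Finset (Fin k)) (W : Submodule F V) : Finset (Fin k) :=
  J.filter (fun j => ¬ W ≤ X j)

/-- `W` is independent w.r.t. the subfamily indexed by `J`. -/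
def Ind (J : Finset (Fin k)) (T : Submodule F V) : Prop :=
  ∀ W ≤ T, finrank F W ≤ (NN X J W).card

def Tight (J : Finset (Fin k)) (W : Submodule F V) : Prop :=
  Ind X J W ∧ finrank F W = (NN X J W).card

variable {X}

lemma NN_subset (J : Finset (Fin k)) (W : Submodule F V) : NN X J W ⊆ J :=
  Finset.filter_subset _ _

lemma mem_NN {J : Finset (Fin k)} {W : Submodule F V} {j : Fin k} :
    j ∈ NN X J W ↔ j ∈ J ∧ ¬ W ≤ X j := by
  classical simp [NN]

lemma NN_mono {J : Finset (Fin k)} {W₁ W₂ : Submodule F V} (h : W₁ ≤ W₂) :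
    NN X J W₁ ⊆ NN X J W₂ := by
  intro j hj
  rw [mem_NN] at hj ⊢
  exact ⟨hj.1, fun hle => hj.2 (h.trans hle)⟩

lemma NN_mono_index {J₁ J₂ : Finset (Fin k)} (h : J₁ ⊆ J₂) (W : Submodule F V) :
    NN X J₁ W ⊆ NN X J₂ W := by
  intro j hj; rw [mem_NN] at hj ⊢; exact ⟨h hj.1, hj.2⟩

lemma NN_bot (J : Finset (Fin k)) : NN X J (⊥ : Submodule F V) = ∅ := by
  ext j; simp [mem_NN]

lemma NN_sup (J : Finset (Fin k)) (A B : Submodule F V) :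
    NN X J (A ⊔ B) = NN X J A ∪ NN X J B := by
  ext j
  simp only [mem_NN, Finset.mem_union, sup_le_iff]
  tauto

lemma NN_sdiff (J S : Finset (Fin k)) (W : Submodule F V) :
    NN X (J \ S) W = NN X J W \ S := by
  ext j; simp only [mem_NN, Finset.mem_sdiff]; tauto

lemma NN_erase (J : Finset (Fin k)) (j₀ : Fin k) (W : Submodule F V) :
    NN X (J.erase j₀) W = (NN X J W).erase j₀ := by
  ext j; simp only [mem_NN, Finset.mem_erase]; tauto

lemma Ind.mono_space {J : Finset (Fin k)} {T W : Submodule F V} (h : Ind X J T) (hW : W ≤ T) :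
    Ind X J W := fun U hU => h U (hU.trans hW)

lemma Ind.mono_index {J₁ J₂ : Finset (Fin k)} {T : Submodule F V} (h : J₁ ⊆ J₂)
    (hT : Ind X J₁ T) : Ind X J₂ T := fun U hU =>
  (hT U hU).trans (Finset.card_le_card (NN_mono_index h U))

lemma Ind.dim_le {J : Finset (Fin k)} {T : Submodule F V} (h : Ind X J T) :
    finrank F T ≤ (NN X J T).card := h T le_rfl

lemma ind_bot (J : Finset (Fin k)) : Ind X J (⊥ : Submodule F V) := by
  intro W hW
  rw [le_bot_iff] at hW
  subst hW
  simp

lemma tight_bot (J : Finset (Fin k)) : Tight X J (⊥ : Submodule F V) :=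
  ⟨ind_bot J, by simp [NN_bot]⟩


lemma tight_sup {J : Finset (Fin k)} {C A B : Submodule F V} (hC : Ind X J C)
    (hA : A ≤ C) (hB : B ≤ C) (tA : Tight X J A) (tB : Tight X J B) :
    Tight X J (A ⊔ B) := by
  have hsupC : A ⊔ B ≤ C := sup_le hA hB
  have hind : Ind X J (A ⊔ B) := hC.mono_space hsupC
  constructor
  · exact hind
  · -- card: |NN (A⊔B)| + |NN A ∩ NN B| = |NN A| + |NN B|
    have hcard : (NN X J (A ⊔ B)).card + (NN X J A ∩ NN X J B).card
        = (NN X J A).card + (NN X J B).card := by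
      rw [NN_sup]; exact Finset.card_union_add_card_inter _ _
    have hinf1 : NN X J (A ⊓ B) ⊆ NN X J A ∩ NN X J B := by
      intro j hj
      exact Finset.mem_inter.2 ⟨NN_mono inf_le_left hj, NN_mono inf_le_right hj⟩
    have hinf2 : finrank F ↥(A ⊓ B) ≤ (NN X J A ∩ NN X J B).card :=
      (hC (A ⊓ B) (inf_le_left.trans hA)).trans (Finset.card_le_card hinf1)
    have hrank : finrank F ↥(A ⊔ B) + finrank F ↥(A ⊓ B)
        = finrank F ↥A + finrank F ↥B := Submodule.finrank_sup_add_finrank_inf_eq A B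
    have h2 := hind.dim_le
    have e1 := tA.2
    have e2 := tB.2
    omega


lemma exists_maxdim {P : Submodule F V → Prop} (hne : ∃ W, P W) :
    ∃ C, P C ∧ ∀ D, P D → finrank F D ≤ finrank F C := by
  set S : Set ℕ := {d | ∃ W, P W ∧ finrank F W = d} with hS
  have hSne : S.Nonempty := by
    obtain ⟨W, hW⟩ := hne
    exact ⟨finrank F W, W, hW, rfl⟩
  have hbdd : BddAbove S := by
    refine ⟨finrank F V, fun d hd => ?_⟩
    obtain ⟨W, _, rfl⟩ := hd
    exact Submodule.finrank_le W
  obtain ⟨C, hC, hCr⟩ := Nat.sSup_mem hSne hbdd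
  refine ⟨C, hC, fun D hD => ?_⟩
  rw [hCr]
  exact le_csSup hbdd ⟨D, hD, rfl⟩

lemma exists_tightTop {J : Finset (Fin k)} {C : Submodule F V} (hC : Ind X J C) :
    ∃ Ts, Tight X J Ts ∧ Ts ≤ C ∧ ∀ H, Tight X J H → H ≤ C → H ≤ Ts := by
  obtain ⟨Ts, ⟨hTt, hTle⟩, hmax⟩ :=
    exists_maxdim (P := fun W => Tight X J W ∧ W ≤ C) ⟨⊥, tight_bot J, bot_le⟩
  refine ⟨Ts, hTt, hTle, fun H hH hHC => ?_⟩
  have hsup : Tight X J (H ⊔ Ts) := tight_sup hC hHC hTle hH hTt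
  have h1 : finrank F ↥(H ⊔ Ts) ≤ finrank F ↥Ts := hmax _ ⟨hsup, sup_le hHC hTle⟩
  have h2 : Ts = H ⊔ Ts := Submodule.eq_of_le_of_finrank_le le_sup_right h1
  rw [h2]
  exact le_sup_left

variable (X) in
/-- intersection of all `X j`, `j ∈ J`, containing `H`. -/
noncomputable def Fl (J : Finset (Fin k)) (H : Submodule F V) : Submodule F V :=
  (J.filter (fun j => H ≤ X j)).inf X

lemma Fl_le {J : Finset (Fin k)} {H : Submodule F V} {j : Fin k} (hj : j ∈ J)
    (h : H ≤ X j) : Fl X J H ≤ X j :=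
  Finset.inf_le (Finset.mem_filter.2 ⟨hj, h⟩)

lemma Fl_anti {J : Finset (Fin k)} {H₁ H₂ : Submodule F V} (h : H₁ ≤ H₂) :
    Fl X J H₁ ≤ Fl X J H₂ := by
  apply Finset.inf_mono
  intro j hj
  rw [Finset.mem_filter] at hj ⊢
  exact ⟨hj.1, h.trans hj.2⟩

lemma le_Fl_of_NN_le {J : Finset (Fin k)} {H U : Submodule F V}
    (h : NN X J U ⊆ NN X J H) : U ≤ Fl X J H := by
  apply Finset.le_inf
  intro j hj
  rw [Finset.mem_filter] at hj
  by_contra hUX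
  have : j ∈ NN X J U := mem_NN.2 ⟨hj.1, hUX⟩
  have := h this
  rw [mem_NN] at this
  exact this.2 hj.2

lemma NN_Fl_subset {J : Finset (Fin k)} (H : Submodule F V) :
    NN X J (Fl X J H) ⊆ NN X J H := by
  intro j hj
  rw [mem_NN] at hj ⊢
  refine ⟨hj.1, fun hle => hj.2 (Fl_le hj.1 hle)⟩

/-- The key covering lemma: if `C` is independent and cannot be augmented by a line of `M`,
then `M ≤ C ⊔ Fl Ts` for the tight top `Ts` of `C`. -/
lemma cover {J : Finset (Fin k)} {C M Ts : Submodule F V} (hC : Ind X J C) (hCM : C ≤ M)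
    (hTs : ∀ H, Tight X J H → H ≤ C → H ≤ Ts)
    (hmax : ∀ x ∈ M, x ∉ C → ¬ Ind X J (C ⊔ Submodule.span F {x})) :
    M ≤ C ⊔ Fl X J Ts := by
  intro x hx
  by_cases hxC : x ∈ C
  · exact Submodule.mem_sup_left hxC
  have hx0 : x ≠ 0 := fun h => hxC (h ▸ C.zero_mem)
  set D := C ⊔ Submodule.span F {x} with hD
  obtain ⟨U, hUD, hUv⟩ : ∃ U ≤ D, ¬ finrank F U ≤ (NN X J U).card := by
    have := hmax x hx hxC
    rw [Ind] at this
    push_neg at this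
    obtain ⟨U, h1, h2⟩ := this
    exact ⟨U, h1, by omega⟩
  rw [not_le] at hUv
  have hdimspan : finrank F (Submodule.span F {x}) = 1 := finrank_span_singleton hx0
  have hCD : C < D := by
    rw [hD, lt_iff_le_and_ne]
    refine ⟨le_sup_left, fun h => hxC ?_⟩
    rw [h]
    exact Submodule.mem_sup_right (Submodule.mem_span_singleton_self x)
  have hdimD : finrank F D = finrank F C + 1 := by
    have h1 := Submodule.finrank_sup_add_finrank_inf_eq C (Submodule.span F {x})
    have h2 := Submodule.finrank_lt_finrank_of_lt hCD
    rw [hdimspan, ← hD] at h1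
    omega
  have hUC : ¬ U ≤ C := fun h => absurd (hC U h) (by omega)
  have hdimUC : finrank F ↥(U ⊔ C) = finrank F C + 1 := by
    have h1 : C < U ⊔ C := lt_of_le_of_ne le_sup_right (fun h => hUC (by rw [h]; exact le_sup_left))
    have h2 : U ⊔ C ≤ D := sup_le hUD hCD.le
    have := Submodule.finrank_lt_finrank_of_lt h1
    have := Submodule.finrank_mono h2
    omega
  set H := U ⊓ C with hH
  have hdimH : finrank F U = finrank F ↥H + 1 := by
    have h1 := Submodule.finrank_sup_add_finrank_inf_eq U C
    rw [← hH] at h1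
    omega
  have hHgood : finrank F ↥H ≤ (NN X J H).card := hC H inf_le_right
  have hNNHU : NN X J H ⊆ NN X J U := NN_mono inf_le_left
  have hcardeq : (NN X J H).card = (NN X J U).card ∧ finrank F ↥H = (NN X J H).card := by
    have := Finset.card_le_card hNNHU
    omega
  have hNNeq : NN X J H = NN X J U :=
    Finset.eq_of_subset_of_card_le hNNHU (le_of_eq hcardeq.1.symm)
  have hHtight : Tight X J H := ⟨hC.mono_space inf_le_right, hcardeq.2⟩
  have hHTs : H ≤ Ts := hTs H hHtight inf_le_right
  have hUFl : U ≤ Fl X J Ts :=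
    (le_Fl_of_NN_le (by rw [← hNNeq])).trans (Fl_anti hHTs)
  have hDeq : C ⊔ U = D := by
    apply Submodule.eq_of_le_of_finrank_le (sup_le hCD.le hUD)
    rw [hdimD, sup_comm, ← hdimUC]
  have hxD : x ∈ D := Submodule.mem_sup_right (Submodule.mem_span_singleton_self x)
  rw [← hDeq] at hxD
  exact (sup_le_sup_left hUFl C) hxD


lemma finrank_sup_span_singleton {C : Submodule F V} {x : V} (hxC : x ∉ C) :
    finrank F ↥(C ⊔ Submodule.span F {x}) = finrank F C + 1 := by
  have hx0 : x ≠ 0 := fun h => hxC (h ▸ C.zero_mem)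
  have h1 := Submodule.finrank_sup_add_finrank_inf_eq C (Submodule.span F {x})
  have hCD : C < C ⊔ Submodule.span F {x} := by
    rw [lt_iff_le_and_ne]
    refine ⟨le_sup_left, fun h => hxC ?_⟩
    rw [h]
    exact Submodule.mem_sup_right (Submodule.mem_span_singleton_self x)
  have h2 := Submodule.finrank_lt_finrank_of_lt hCD
  rw [finrank_span_singleton hx0] at h1
  omega

lemma NN_cover {J : Finset (Fin k)} {C M Ts : Submodule F V}
    (hcov : M ≤ C ⊔ Fl X J Ts) (hTsC : Ts ≤ C) : NN X J M ⊆ NN X J C := by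
  intro j hj
  rw [mem_NN] at hj ⊢
  refine ⟨hj.1, fun hCX => ?_⟩
  exact hj.2 (hcov.trans (sup_le hCX ((Fl_le hj.1 (hTsC.trans hCX)))))

lemma delete_one {J : Finset (Fin k)} {T : Submodule F V} (j : Fin k) (hT : Ind X J T) :
    ∃ T' ≤ T, Ind X (J.erase j) T' ∧ finrank F T ≤ finrank F T' + 1 := by
  set J' := J.erase j with hJ'
  obtain ⟨C, ⟨hCle, hCind⟩, hmaxd⟩ :=
    exists_maxdim (P := fun D => D ≤ T ∧ Ind X J' D) ⟨⊥, bot_le, ind_bot _⟩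
  obtain ⟨Ts, hTst, hTsle, hTsmax⟩ := exists_tightTop hCind
  have hcov : T ≤ C ⊔ Fl X J' Ts := by
    refine cover hCind hCle hTsmax (fun x hxT hxC hind => ?_)
    have hle : C ⊔ Submodule.span F {x} ≤ T :=
      sup_le hCle ((Submodule.span_singleton_le_iff_mem x T).2 hxT)
    have := hmaxd _ ⟨hle, hind⟩
    rw [_root_.finrank_sup_span_singleton hxC] at this
    omega
  set G := Fl X J' Ts ⊓ T with hG
  have hTeq : C ⊔ G = T := by
    rw [hG, ← sup_inf_assoc_of_le _ hCle]
    exact inf_eq_right.2 hcov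
  have hGT : G ≤ T := inf_le_right
  have hTsG : Ts ≤ C ⊓ G := le_inf hTsle (le_inf (le_Fl_of_NN_le subset_rfl) (hTsle.trans hCle))
  have hdimG : finrank F ↥G ≤ finrank F ↥Ts + 1 := by
    have h1 : finrank F ↥G ≤ (NN X J G).card := hT G hGT
    have h2 : NN X J G ⊆ insert j (NN X J' G) := by
      intro i hi
      rcases eq_or_ne i j with rfl | hij
      · exact Finset.mem_insert_self _ _
      · refine Finset.mem_insert_of_mem ?_
        rw [mem_NN] at hi ⊢
        exact ⟨Finset.mem_erase.2 ⟨hij, hi.1⟩, hi.2⟩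
    have h3 : NN X J' G ⊆ NN X J' Ts :=
      (NN_mono inf_le_left).trans (NN_Fl_subset Ts)
    have h4 := Finset.card_le_card h2
    have h5 := Finset.card_insert_le j (NN X J' G)
    have h6 := Finset.card_le_card h3
    have h7 := hTst.2
    omega
  have h8 : finrank F ↥Ts ≤ finrank F ↥(C ⊓ G) := Submodule.finrank_mono hTsG
  have h9 := Submodule.finrank_sup_add_finrank_inf_eq C G
  rw [hTeq] at h9
  exact ⟨C, hCle, hCind, by omega⟩

lemma delete_set (S : Finset (Fin k)) :
    ∀ (J : Finset (Fin k)) (T : Submodule F V), Ind X J T →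
    ∃ T₁ ≤ T, Ind X (J \ S) T₁ ∧ finrank F T ≤ finrank F T₁ + (S ∩ NN X J T).card := by
  induction S using Finset.induction_on with
  | empty => exact fun J T hT => ⟨T, le_rfl, by simpa using hT, by simp⟩
  | @insert j S hjS IH =>
    intro J T hT
    have hJs : J.erase j \ S = J \ insert j S := by
      ext i
      simp only [Finset.mem_sdiff, Finset.mem_erase, Finset.mem_insert]
      tauto
    by_cases hj : j ∈ NN X J T
    · obtain ⟨T', hT'le, hT'ind, hT'rank⟩ := delete_one j hT
      obtain ⟨T₁, hT₁le, hT₁ind, hT₁rank⟩ := IH (J.erase j) T' hT'ind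
      rw [hJs] at hT₁ind
      refine ⟨T₁, hT₁le.trans hT'le, hT₁ind, ?_⟩
      have hsub : S ∩ NN X (J.erase j) T' ⊆ (insert j S ∩ NN X J T).erase j := by
        intro i hi
        rw [Finset.mem_inter] at hi
        rw [NN_erase] at hi
        rw [Finset.mem_erase, Finset.mem_inter]
        have hine := Finset.mem_erase.1 hi.2
        exact ⟨hine.1, Finset.mem_insert_of_mem hi.1, NN_mono hT'le hine.2⟩
      have hc1 := Finset.card_le_card hsub
      have hc2 : ((insert j S ∩ NN X J T).erase j).card + 1 = (insert j S ∩ NN X J T).card := by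
        rw [Finset.card_erase_add_one]
        exact Finset.mem_inter.2 ⟨Finset.mem_insert_self _ _, hj⟩
      omega
    · have hTind' : Ind X (J.erase j) T := by
        intro W hW
        have hjW : j ∉ NN X J W := fun h => hj (NN_mono hW h)
        rw [NN_erase, Finset.erase_eq_of_notMem hjW]
        exact hT W hW
      obtain ⟨T₁, hT₁le, hT₁ind, hT₁rank⟩ := IH (J.erase j) T hTind'
      rw [hJs] at hT₁ind
      refine ⟨T₁, hT₁le, hT₁ind, ?_⟩
      have hsub : S ∩ NN X (J.erase j) T ⊆ insert j S ∩ NN X J T := by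
        intro i hi
        rw [Finset.mem_inter] at hi ⊢
        rw [NN_erase] at hi
        exact ⟨Finset.mem_insert_of_mem hi.1, (Finset.erase_subset _ _) hi.2⟩
      have := Finset.card_le_card hsub
      omega



lemma merge_aux {J : Finset (Fin k)} {A B₁ : Submodule F V} (tA : Tight X J A)
    (hB₁ : Ind X (J \ NN X J A) B₁) : Ind X J (A ⊔ B₁) := by
  intro W hW
  set B₂ := B₁ ⊓ (W ⊔ A) with hB₂
  have hWA : W ⊔ A = A ⊔ B₂ := by
    have h := sup_inf_assoc_of_le B₁ (le_sup_right : A ≤ W ⊔ A)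
    rw [inf_eq_right.2 (sup_le (hW.trans le_rfl) le_sup_left : W ⊔ A ≤ A ⊔ B₁)] at h
    exact h
  have d1 := Submodule.finrank_sup_add_finrank_inf_eq W A
  have d2 := Submodule.finrank_sup_add_finrank_inf_eq A B₂
  have d3 : finrank F ↥(W ⊔ A) = finrank F ↥(A ⊔ B₂) := by rw [hWA]
  have b1 : finrank F ↥(W ⊓ A) ≤ (NN X J W ∩ NN X J A).card := by
    refine (tA.1 _ inf_le_right).trans (Finset.card_le_card ?_)
    intro i hi
    exact Finset.mem_inter.2 ⟨NN_mono inf_le_left hi, NN_mono inf_le_right hi⟩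
  have b2 : finrank F ↥B₂ ≤ (NN X J W \ NN X J A).card := by
    refine (hB₁ B₂ inf_le_left).trans (Finset.card_le_card ?_)
    intro i hi
    rw [NN_sdiff] at hi
    rw [Finset.mem_sdiff] at hi ⊢
    refine ⟨?_, hi.2⟩
    have h1 : NN X J B₂ ⊆ NN X J W ∪ NN X J A := by
      rw [← NN_sup]
      exact NN_mono inf_le_right
    rcases Finset.mem_union.1 (h1 hi.1) with h | h
    · exact h
    · exact absurd h hi.2
  have b3 := Finset.card_inter_add_card_sdiff (NN X J W) (NN X J A)
  omega


lemma merge {J : Finset (Fin k)} {A B : Submodule F V} (tA : Tight X J A) (tB : Tight X J B) :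
    ∃ C, Tight X J C ∧ NN X J C = NN X J A ∪ NN X J B := by
  set S := NN X J A with hS
  obtain ⟨B₁, hB₁le, hB₁ind, hB₁rank⟩ := delete_set S J B tB.1
  set Z := A ⊔ B₁ with hZ
  have hZind : Ind X J Z := merge_aux tA hB₁ind
  have hABbot : A ⊓ B₁ = ⊥ := by
    rw [← Submodule.finrank_eq_zero (R := F)]
    have h1 : finrank F ↥(A ⊓ B₁) ≤ (NN X (J \ S) (A ⊓ B₁)).card := hB₁ind _ inf_le_right
    have h2 : NN X (J \ S) (A ⊓ B₁) = ∅ := by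
      rw [NN_sdiff]
      apply Finset.eq_empty_of_forall_notMem
      intro i hi
      rw [Finset.mem_sdiff] at hi
      exact hi.2 (NN_mono inf_le_left hi.1)
    rw [h2] at h1
    simpa using h1
  have hdimZ : finrank F ↥Z = finrank F A + finrank F B₁ := by
    have := Submodule.finrank_sup_add_finrank_inf_eq A B₁
    rw [hABbot] at this
    simpa using this
  have hZlarge : (NN X J A ∪ NN X J B).card ≤ finrank F ↥Z := by
    have h1 := Finset.card_union_add_card_inter (NN X J A) (NN X J B)
    have h2 : S ∩ NN X J B = NN X J A ∩ NN X J B := rfl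
    have e1 := tA.2
    have e2 := tB.2
    rw [h2] at hB₁rank
    omega
  set M := A ⊔ B with hM
  have hZM : Z ≤ M := sup_le le_sup_left (hB₁le.trans le_sup_right)
  obtain ⟨C, ⟨hZC, hCM, hCind⟩, hmaxd⟩ :=
    exists_maxdim (P := fun D => Z ≤ D ∧ D ≤ M ∧ Ind X J D) ⟨Z, le_rfl, hZM, hZind⟩
  obtain ⟨Ts, hTst, hTsle, hTsmax⟩ := exists_tightTop hCind
  have hcov : M ≤ C ⊔ Fl X J Ts := by
    refine cover hCind hCM hTsmax (fun x hxM hxC hind => ?_)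
    have hle : C ⊔ Submodule.span F {x} ≤ M :=
      sup_le hCM ((Submodule.span_singleton_le_iff_mem x M).2 hxM)
    have := hmaxd _ ⟨hZC.trans le_sup_left, hle, hind⟩
    rw [_root_.finrank_sup_span_singleton hxC] at this
    omega
  have hNNeq : NN X J C = NN X J A ∪ NN X J B := by
    apply subset_antisymm
    · rw [← NN_sup]
      exact NN_mono hCM
    · rw [← NN_sup]
      exact (NN_cover hcov hTsle)
  have hdimC : (NN X J C).card ≤ finrank F ↥C := by
    rw [hNNeq]
    exact hZlarge.trans (Submodule.finrank_mono hZC)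
  exact ⟨C, ⟨hCind, le_antisymm (hCind.dim_le) hdimC⟩, hNNeq⟩

lemma crux {J : Finset (Fin k)} (hyp : ∀ j ∈ J, ∃ W, Tight X J W ∧ j ∈ NN X J W) :
    ∃ W, Tight X J W ∧ NN X J W = J := by
  suffices h : ∀ S : Finset (Fin k), S ⊆ J → ∃ W, Tight X J W ∧ S ⊆ NN X J W by
    obtain ⟨W, hW, hsub⟩ := h J subset_rfl
    exact ⟨W, hW, subset_antisymm (NN_subset J W) hsub⟩
  intro S
  induction S using Finset.induction_on with
  | empty => exact fun _ => ⟨⊥, tight_bot J, by simp⟩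
  | @insert j S hjS IH =>
    intro hins
    obtain ⟨W₁, hW₁, hSW₁⟩ := IH ((Finset.subset_insert j S).trans hins)
    obtain ⟨W₂, hW₂, hjW₂⟩ := hyp j (hins (Finset.mem_insert_self j S))
    obtain ⟨C, hC, hCNN⟩ := merge hW₁ hW₂
    refine ⟨C, hC, ?_⟩
    rw [hCNN]
    intro i hi
    rcases Finset.mem_insert.1 hi with rfl | hiS
    · exact Finset.mem_union_right _ hjW₂
    · exact Finset.mem_union_left _ (hSW₁ hiS)


/-- Characterization of partial q-transversals via the counting condition. -/
lemma char {ι : Type*} [Fintype ι] (Y : ι → Submodule F V) (T : Submodule F V) :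
    IsPartialQTransversal Y T ↔
      ∀ W ≤ T, finrank F W ≤ (Finset.univ.filter (fun j => ¬ W ≤ Y j)).card := by
  constructor
  · intro h W hWT
    obtain ⟨s, hsW, hsspan, hsind⟩ := exists_linearIndependent F ((W : Set V))
    rw [Submodule.span_eq] at hsspan
    have hsT : s ⊆ (T : Set V) := hsW.trans hWT
    have hsind' : LinearIndepOn F id s := hsind
    set b := hsind'.extend hsT with hb
    have hbT : b ⊆ (T : Set V) := hsind'.extend_subset hsT
    have hsb : s ⊆ b := hsind'.subset_extend hsT
    have hbind : LinearIndependent F ((↑) : b → V) := hsind'.linearIndepOn_extend hsT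
    have hbspan : Submodule.span F b = T := by
      apply le_antisymm (Submodule.span_le.2 hbT)
      intro x hx
      exact hsind'.subset_span_extend hsT hx
    have hbfin : b.Finite := hbind.setFinite
    haveI : Fintype b := hbfin.fintype
    have hsfin : s.Finite := hbfin.subset hsb
    haveI : Fintype s := hsfin.fintype
    set m := Fintype.card b with hm
    set e : Fin m ≃ b := (Fintype.equivFin b).symm with he
    set f : Fin m → V := fun i => ((e i : b) : V) with hf
    have hfind : LinearIndependent F f := hbind.comp e e.injective
    have hfrange : Set.range f = b := by
      rw [hf]
      have : Set.range (fun i => ((e i : b) : V)) = Subtype.val '' Set.range e := by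
        rw [← Set.range_comp]; rfl
      rw [this, e.range_eq_univ, Set.image_univ, Subtype.range_coe]
    have hfspan : Submodule.span F (Set.range f) = T := by rw [hfrange, hbspan]
    obtain ⟨σ, hσinj, hσ⟩ := h m f hfind hfspan
    have hfinj : Function.Injective f := hfind.injective
    -- index set of s inside Fin m
    set sIdx : Finset (Fin m) := Finset.univ.filter (fun i => f i ∈ s) with hsIdx
    have hcard1 : sIdx.card = s.toFinset.card := by
      apply Finset.card_bij (fun i _ => f i)
      · intro i hi
        rw [hsIdx, Finset.mem_filter] at hi
        exact Set.mem_toFinset.2 hi.2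
      · intro i hi i' hi' hee
        exact hfinj hee
      · intro x hx
        have hxs : x ∈ s := Set.mem_toFinset.1 hx
        have hxb : x ∈ b := hsb hxs
        refine ⟨e.symm ⟨x, hxb⟩, ?_, ?_⟩
        · rw [hsIdx, Finset.mem_filter]
          refine ⟨Finset.mem_univ _, ?_⟩
          simp only [hf, Equiv.apply_symm_apply]
          exact hxs
        · simp only [hf, Equiv.apply_symm_apply]
    have hcard2 : finrank F W = s.toFinset.card := by
      rw [← hsspan]
      exact finrank_span_set_eq_card hsind
    rw [hcard2, ← hcard1]
    apply Finset.card_le_card_of_injOn σ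
    · intro i hi
      rw [hsIdx, Finset.mem_coe, Finset.mem_filter] at hi
      rw [Finset.mem_coe, Finset.mem_filter]
      refine ⟨Finset.mem_univ _, fun hle => hσ i (hle ?_)⟩
      exact hsW hi.2
    · intro i _ i' _ hee
      exact hσinj hee
  · intro h m b hbind hbspan
    classical
    set t : Fin m → Finset ι := fun i => Finset.univ.filter (fun j => b i ∉ Y j) with ht
    have hall : ∀ sF : Finset (Fin m), sF.card ≤ (sF.biUnion t).card := by
      intro sF
      set W := Submodule.span F (b '' ↑sF) with hW
      have hWT : W ≤ T := by
        rw [hW, ← hbspan]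
        exact Submodule.span_mono (Set.image_subset_range b ↑sF)
      have hcard : finrank F W = sF.card := by
        have hind' : LinearIndependent F (fun i : ↥(↑sF : Set (Fin m)) => b i) :=
          hbind.comp _ Subtype.val_injective
        have hr : Set.range (fun i : ↥(↑sF : Set (Fin m)) => b i) = b '' ↑sF := by
          have : (fun i : ↥(↑sF : Set (Fin m)) => b i) = b ∘ Subtype.val := rfl
          rw [this, Set.range_comp, Subtype.range_coe]
        have := finrank_span_eq_card hind'
        rw [hr] at this
        rw [hW, this]
        simp
      have hsubset : Finset.univ.filter (fun j => ¬ W ≤ Y j) ⊆ sF.biUnion t := by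
        intro j hj
        rw [Finset.mem_filter] at hj
        by_contra hnb
        apply hj.2
        rw [hW, Submodule.span_le]
        rintro x ⟨i, hi, rfl⟩
        by_contra hbx
        exact hnb (Finset.mem_biUnion.2 ⟨i, hi, by rw [ht]; exact Finset.mem_filter.2 ⟨Finset.mem_univ _, hbx⟩⟩)
      calc sF.card = finrank F W := hcard.symm
        _ ≤ (Finset.univ.filter (fun j => ¬ W ≤ Y j)).card := h W hWT
        _ ≤ (sF.biUnion t).card := Finset.card_le_card hsubset
    obtain ⟨σ, hσinj, hσ⟩ := (Finset.all_card_le_biUnion_card_iff_exists_injective t).1 hall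
    refine ⟨σ, hσinj, fun i => ?_⟩
    have := hσ i
    simp only [ht, Finset.mem_filter] at this
    exact this.2


lemma NN_univ_eq (W : Submodule F V) :
    NN X Finset.univ W = Finset.univ.filter (fun j => ¬ W ≤ X j) := rfl

lemma card_filter_subtype (J : Finset (Fin k)) (W : Submodule F V) :
    (Finset.univ.filter (fun j : {x // x ∈ J} => ¬ W ≤ X j.1)).card = (NN X J W).card := by
  apply Finset.card_bij (fun j _ => j.1)
  · intro j hj
    rw [Finset.mem_filter] at hj
    exact mem_NN.2 ⟨j.2, hj.2⟩
  · intro j _ j' _ h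
    exact Subtype.ext h
  · intro j hj
    rw [mem_NN] at hj
    exact ⟨⟨j, hj.1⟩, Finset.mem_filter.2 ⟨Finset.mem_univ _, hj.2⟩, rfl⟩

variable (X) in
def Pres (J : Finset (Fin k)) : Prop :=
  ∀ W : Submodule F V, Ind X Finset.univ W → finrank F W ≤ (NN X J W).card

lemma pres_univ : Pres X (Finset.univ : Finset (Fin k)) := fun _ hW => hW.dim_le

lemma Pres.ind_iff {J : Finset (Fin k)} (hP : Pres X J) (T : Submodule F V) :
    Ind X J T ↔ Ind X Finset.univ T := by
  constructor
  · exact fun h => h.mono_index (Finset.subset_univ J)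
  · intro h W hW
    exact hP W (h.mono_space hW)

lemma removal {J : Finset (Fin k)} {r : ℕ} (hP : Pres X J)
    (hub : ∀ W : Submodule F V, Ind X Finset.univ W → finrank F W ≤ r)
    (hcard : r < J.card) : ∃ j ∈ J, Pres X (J.erase j) := by
  by_contra hcon
  push_neg at hcon
  have hyp : ∀ j ∈ J, ∃ W, Tight X J W ∧ j ∈ NN X J W := by
    intro j hj
    obtain ⟨W, hWind, hWbig⟩ : ∃ W, Ind X Finset.univ W ∧
        (NN X (J.erase j) W).card < finrank F W := by
      have := hcon j hj
      rw [Pres] at this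
      push_neg at this
      obtain ⟨W, h1, h2⟩ := this
      exact ⟨W, h1, h2⟩
    have hWJ : finrank F W ≤ (NN X J W).card := hP W hWind
    have hWJind : Ind X J W := by
      intro U hU
      exact hP U (hWind.mono_space hU)
    rw [NN_erase] at hWbig
    have hjW : j ∈ NN X J W := by
      by_contra hjn
      rw [Finset.erase_eq_of_notMem hjn] at hWbig
      omega
    have hcarderase := Finset.card_erase_add_one hjW
    exact ⟨W, ⟨hWJind, by omega⟩, hjW⟩
  obtain ⟨W, tW, hNW⟩ := crux hyp
  have h1 : finrank F W = J.card := by rw [tW.2, hNW]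
  have h2 : finrank F W ≤ r := hub W (tW.1.mono_index (Finset.subset_univ J))
  omega

lemma descend {r : ℕ} (hub : ∀ W : Submodule F V, Ind X Finset.univ W → finrank F W ≤ r) :
    ∀ (n : ℕ) (J : Finset (Fin k)), J.card = n → Pres X J → r ≤ J.card →
    ∃ J', J'.card = r ∧ Pres X J' := by
  intro n
  induction n using Nat.strong_induction_on with
  | _ n IH =>
    intro J hJn hP hrle
    rcases eq_or_lt_of_le hrle with heq | hlt
    · exact ⟨J, heq.symm, hP⟩
    · obtain ⟨j, hjJ, hPe⟩ := removal hP hub hlt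
      have hcarde : (J.erase j).card = n - 1 := by
        rw [Finset.card_erase_of_mem hjJ, hJn]
      have hn1 : n - 1 < n := by omega
      refine IH (n-1) hn1 (J.erase j) hcarde hPe ?_
      rw [hcarde]
      omega

end Core


/-- If `r` is the maximum dimension of a partial q-transversal of `X = (X 1, …, X k)`,
then some subfamily indexed by a set `J` of exactly `r` indices has the same partial
q-transversals as `X`. -/
theorem exists_presentation_card_rank {F V : Type*} [Field F] [Fintype F]
    [AddCommGroup V] [Module F V] [FiniteDimensional F V]
    (k : ℕ) (X : Fin k → Submodule F V) (r : ℕ)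
    (hr : IsGreatest
      {d : ℕ | ∃ T : Submodule F V, IsPartialQTransversal X T ∧ Module.finrank F T = d} r) :
    ∃ J : Finset (Fin k), J.card = r ∧
      ∀ T : Submodule F V,
        IsPartialQTransversal (fun j : J => X j) T ↔ IsPartialQTransversal X T := by
  classical
  have hchar_full : ∀ T : Submodule F V, IsPartialQTransversal X T ↔ Ind X Finset.univ T := by
    intro T
    rw [char X T]
    constructor <;> intro h W hW <;> simpa [NN] using h W hW
  have hub : ∀ W : Submodule F V, Ind X Finset.univ W → finrank F W ≤ r := by
    intro W hW
    exact hr.2 ⟨W, (hchar_full W).2 hW, rfl⟩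
  have hrk : r ≤ (Finset.univ : Finset (Fin k)).card := by
    obtain ⟨T₀, hT₀, hT₀r⟩ := hr.1
    have h1 : Ind X Finset.univ T₀ := (hchar_full T₀).1 hT₀
    calc r = finrank F T₀ := hT₀r.symm
      _ ≤ (NN X Finset.univ T₀).card := h1.dim_le
      _ ≤ (Finset.univ : Finset (Fin k)).card := Finset.card_le_card (NN_subset _ _)
  obtain ⟨J, hJcard, hJP⟩ := descend hub (Finset.univ.card) Finset.univ rfl pres_univ hrk
  refine ⟨J, hJcard, fun T => ?_⟩
  rw [hchar_full T, char (fun j : J => X j) T]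
  constructor
  · intro h
    rw [← (hJP.ind_iff T)]
    intro W hW
    have := h W hW
    rwa [card_filter_subtype] at this
  · intro h W hW
    rw [card_filter_subtype]
    exact ((hJP.ind_iff T).2 h) W hW
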